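/- Let R > 0, τ > 0, and λ ∈ ℝ with 4λ ≤ τ². Suppose φ : [0,R] → ℝ is twice continuously differentiable with φ > 0 on [0,R), φ(R) = 0, φ'(0) = 0, and −φ''(r) + τ φ'(r) = λ φ(r) for all r ∈ [0,R]. Then λ = (τ²/4) · (1 + √(1 − 4λ/τ²))² · exp(−√(1 − 4λ/τ²) · τR). -/

import Mathlib

open MeasureTheory Set
open scoped RealInnerProductSpace

noncomputable section

/-- Euclidean space ℝⁿ. -/
abbrev Euc (n : ℕ) := EuclideanSpace ℝ (Fin n)

/-- The Laplacian of a scalar function on ℝⁿ, as the sum of the second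
partial derivatives in the coordinate directions. -/
def lap {n : ℕ} (φ : Euc n → ℝ) (x : Euc n) : ℝ :=
  ∑ i : Fin n,
    iteratedFDeriv ℝ 2 φ x ![EuclideanSpace.single i 1, EuclideanSpace.single i 1]

/-- The unit radial vector field `e_r(x) = x / |x|` (with value `0` at `x = 0`). -/
def eRad {n : ℕ} (x : Euc n) : Euc n := ‖x‖⁻¹ • x

/-- `Ω` is a bounded domain of ℝⁿ whose boundary is of class `C^{2,α}`:
`Ω` is open, connected and bounded, and near each boundary point, `Ω` and its
boundary are the sublevel and level set of a `C²` defining function with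
nonvanishing differential whose second derivative is `α`-Hölder continuous. -/
def IsC2AlphaDomain {n : ℕ} (Ω : Set (Euc n)) (α : ℝ) : Prop :=
  IsOpen Ω ∧ IsConnected Ω ∧ Bornology.IsBounded Ω ∧
  ∀ x ∈ frontier Ω, ∃ (U : Set (Euc n)) (F : Euc n → ℝ),
    IsOpen U ∧ x ∈ U ∧ ContDiffOn ℝ 2 F U ∧
    (∀ y ∈ U, fderivWithin ℝ F U y ≠ 0) ∧
    (U ∩ Ω = U ∩ {y | F y < 0}) ∧
    (U ∩ frontier Ω = U ∩ {y | F y = 0}) ∧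
    ∃ C : ℝ, 0 ≤ C ∧ ∀ y ∈ U, ∀ z ∈ U,
      ‖iteratedFDerivWithin ℝ 2 F U y - iteratedFDerivWithin ℝ 2 F U z‖ ≤ C * ‖y - z‖ ^ α

/-- `(lam, φ)` is a principal eigenpair for `−Δ + v·∇` on `Ω` with Dirichlet
boundary condition: `φ ∈ C¹(cl Ω) ∩ C²(Ω)`, `φ > 0` in `Ω`, `φ = 0` on `∂Ω`,
`sup_Ω φ = 1`, and `−Δφ + v·∇φ = lam φ` almost everywhere in `Ω`. -/
def IsPrincipalEigenpair {n : ℕ} (Ω : Set (Euc n)) (v : Euc n → Euc n)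
    (lam : ℝ) (φ : Euc n → ℝ) : Prop :=
  ContDiffOn ℝ 1 φ (closure Ω) ∧ ContDiffOn ℝ 2 φ Ω ∧
  (∀ x ∈ Ω, 0 < φ x) ∧ (∀ x ∈ frontier Ω, φ x = 0) ∧
  sSup (φ '' Ω) = 1 ∧
  (∀ᵐ x ∂(volume.restrict Ω), -lap φ x + ⟪v x, gradient φ x⟫ = lam * φ x)

/-- `(lam, φ)` is a `τ`-minimal eigenpair for `Ω`: `φ ∈ C²(cl Ω)`, `φ > 0` in `Ω`,
`φ = 0` on `∂Ω`, `sup_Ω φ = 1`, and `−Δφ − τ|∇φ| = lam φ` everywhere in `Ω`. -/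
def IsMinEigenpair {n : ℕ} (Ω : Set (Euc n)) (τ lam : ℝ) (φ : Euc n → ℝ) : Prop :=
  ContDiffOn ℝ 2 φ (closure Ω) ∧
  (∀ x ∈ Ω, 0 < φ x) ∧ (∀ x ∈ frontier Ω, φ x = 0) ∧
  sSup (φ '' Ω) = 1 ∧
  ∀ x ∈ Ω, -lap φ x - τ * ‖gradient φ x‖ = lam * φ x

/-- `(lam, φ)` is a `τ`-maximal eigenpair for `Ω`: `φ ∈ C²(cl Ω)`, `φ > 0` in `Ω`,
`φ = 0` on `∂Ω`, `sup_Ω φ = 1`, and `−Δφ + τ|∇φ| = lam φ` everywhere in `Ω`. -/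
def IsMaxEigenpair {n : ℕ} (Ω : Set (Euc n)) (τ lam : ℝ) (φ : Euc n → ℝ) : Prop :=
  ContDiffOn ℝ 2 φ (closure Ω) ∧
  (∀ x ∈ Ω, 0 < φ x) ∧ (∀ x ∈ frontier Ω, φ x = 0) ∧
  sSup (φ '' Ω) = 1 ∧
  ∀ x ∈ Ω, -lap φ x + τ * ‖gradient φ x‖ = lam * φ x

lemma exp_growth (R μ : ℝ) (hR : 0 < R) (ψ : ℝ → ℝ)
    (hψ : ∀ r ∈ Icc 0 R, HasDerivWithinAt ψ (μ * ψ r) (Icc 0 R) r) :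
    ψ R = ψ 0 * Real.exp (μ * R) := by
  set g : ℝ → ℝ := fun r => ψ r * Real.exp (-μ * r) with hg
  have hgd : ∀ r ∈ Icc 0 R, HasDerivWithinAt g 0 (Icc 0 R) r := by
    intro r hr
    have he : HasDerivWithinAt (fun r : ℝ => Real.exp (-μ * r))
        (-μ * Real.exp (-μ * r)) (Icc 0 R) r := by
      have := (((hasDerivAt_id r).const_mul (-μ)).exp).hasDerivWithinAt (s := Icc 0 R)
      simpa [mul_comm] using this
    have := (hψ r hr).mul he
    refine this.congr_deriv (Eq.symm ?_)
    ring
  have hdiff : DifferentiableOn ℝ g (Icc 0 R) := fun r hr => (hgd r hr).differentiableWithinAt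
  have hconst := constant_of_derivWithin_zero hdiff (fun x hx =>
    (hgd x (Ico_subset_Icc_self hx)).derivWithin ((uniqueDiffOn_Icc hR) x (Ico_subset_Icc_self hx)))
  have hRR := hconst R (right_mem_Icc.2 hR.le)
  simp only [hg] at hRR
  have hepos : Real.exp (-μ * R) ≠ 0 := Real.exp_ne_zero _
  field_simp at hRR ⊢
  rw [mul_zero, neg_zero, Real.exp_zero, mul_one] at hRR
  rw [← hRR, mul_assoc, ← Real.exp_add]
  simp

/-- Explicit transcendental equation for the one-dimensional principal
eigenvalue of `−d²/dr² + τ d/dr` on `[0,R]`. -/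
theorem one_dim_eigenvalue_equation (R τ lam : ℝ) (hR : 0 < R) (hτ : 0 < τ)
    (hlam : 4 * lam ≤ τ ^ 2)
    (φ φ' φ'' : ℝ → ℝ)
    (hd1 : ∀ r ∈ Set.Icc 0 R, HasDerivWithinAt φ (φ' r) (Set.Icc 0 R) r)
    (hd2 : ∀ r ∈ Set.Icc 0 R, HasDerivWithinAt φ' (φ'' r) (Set.Icc 0 R) r)
    (hc1 : ContinuousOn φ' (Set.Icc 0 R))
    (hc2 : ContinuousOn φ'' (Set.Icc 0 R))
    (hpos : ∀ r ∈ Set.Ico 0 R, 0 < φ r)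
    (hbd : φ R = 0) (hneu : φ' 0 = 0)
    (heq : ∀ r ∈ Set.Icc 0 R, -φ'' r + τ * φ' r = lam * φ r) :
    lam = τ ^ 2 / 4 * (1 + Real.sqrt (1 - 4 * lam / τ ^ 2)) ^ 2 *
      Real.exp (-(Real.sqrt (1 - 4 * lam / τ ^ 2) * (τ * R))) := by
  have hτ2 : (0:ℝ) < τ ^ 2 := by positivity
  set s := Real.sqrt (1 - 4 * lam / τ ^ 2) with hsdef
  have hs0 : 0 ≤ 1 - 4 * lam / τ ^ 2 := by
    rw [sub_nonneg, div_le_one hτ2]; linarith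
  have hs2 : s ^ 2 = 1 - 4 * lam / τ ^ 2 := Real.sq_sqrt hs0
  set μp := τ * (1 + s) / 2 with hμp
  set μm := τ * (1 - s) / 2 with hμm
  have hsum : μp + μm = τ := by rw [hμp, hμm]; ring
  have hprod : μp * μm = lam := by
    have h1 : μp * μm = τ ^ 2 * (1 - s ^ 2) / 4 := by rw [hμp, hμm]; ring
    rw [h1, hs2]
    field_simp
    ring
  have hψd : ∀ r ∈ Set.Icc 0 R,
      HasDerivWithinAt (fun r => μm * φ r - φ' r) (μp * (μm * φ r - φ' r)) (Set.Icc 0 R) r := by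
    intro r hr
    have h := ((hd1 r hr).const_mul μm).sub (hd2 r hr)
    refine h.congr_deriv (Eq.symm ?_)
    have he := heq r hr
    linear_combination φ r * hprod - φ' r * hsum - he
  have hχd : ∀ r ∈ Set.Icc 0 R,
      HasDerivWithinAt (fun r => μp * φ r - φ' r) (μm * (μp * φ r - φ' r)) (Set.Icc 0 R) r := by
    intro r hr
    have h := ((hd1 r hr).const_mul μp).sub (hd2 r hr)
    refine h.congr_deriv (Eq.symm ?_)
    have he := heq r hr
    linear_combination φ r * hprod - φ' r * hsum - he
  have hψ := exp_growth R μp hR _ hψd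
  have hχ := exp_growth R μm hR _ hχd
  simp only [hbd, hneu, mul_zero, sub_zero, zero_sub] at hψ hχ
  have hφ0 : 0 < φ 0 := hpos 0 ⟨le_rfl, hR⟩
  have key : μm * Real.exp (μp * R) = μp * Real.exp (μm * R) := by
    have h2 : φ 0 * (μm * Real.exp (μp * R)) = φ 0 * (μp * Real.exp (μm * R)) := by
      linear_combination hχ - hψ
    exact mul_left_cancel₀ hφ0.ne' h2
  have e2 : Real.exp (μp * R) * Real.exp (-(μp * R)) = 1 := by
    rw [← Real.exp_add]; simp
  have final : lam = μp ^ 2 * (Real.exp (μm * R) * Real.exp (-(μp * R))) := by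
    calc lam = μp * μm := hprod.symm
      _ = μp * μm * (Real.exp (μp * R) * Real.exp (-(μp * R))) := by rw [e2]; ring
      _ = μp * (μm * Real.exp (μp * R)) * Real.exp (-(μp * R)) := by ring
      _ = μp * (μp * Real.exp (μm * R)) * Real.exp (-(μp * R)) := by rw [key]
      _ = μp ^ 2 * (Real.exp (μm * R) * Real.exp (-(μp * R))) := by ring
  have harg : Real.exp (μm * R) * Real.exp (-(μp * R)) = Real.exp (-(s * (τ * R))) := by
    rw [← Real.exp_add]
    congr 1
    rw [hμp, hμm]; ring
  rw [final, harg, hμp]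
  ring
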